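/- For any signed forest (T,σ) (the underlying graph T is acyclic), the rank of the signed adjacency matrix equals the rank of the unsigned adjacency matrix of T, and both equal 2m(T), twice the matching number of T. -/

import Mathlib

open SimpleGraph
open scoped Classical

noncomputable section

/-- The adjacency matrix of a signed graph `(G, σ)`. -/
def sAdj {V : Type*} [Fintype V] (G : SimpleGraph V) (σ : Sym2 V → ℝ) : Matrix V V ℝ :=
  fun i j => if G.Adj i j then σ s(i, j) else 0

/-- The rank of a signed graph. -/
def srank {V : Type*} [Fintype V] (G : SimpleGraph V) (σ : Sym2 V → ℝ) : ℕ :=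
  (sAdj G σ).rank

/-- The independence number of a graph. -/
def indepNum {V : Type*} (G : SimpleGraph V) : ℕ :=
  sSup {n | ∃ s : Finset V, (∀ a ∈ s, ∀ b ∈ s, ¬ G.Adj a b) ∧ s.card = n}

/-- The matching number of a graph. -/
def matchNum {V : Type*} (G : SimpleGraph V) : ℕ :=
  sSup {n | ∃ M : G.Subgraph, M.IsMatching ∧ M.edgeSet.ncard = n}

/-- The cyclomatic number `|E| - |V| + ω` of a graph (as a natural number;
the quantity is always nonnegative). -/
def cyclomatic {V : Type*} [Fintype V] (G : SimpleGraph V) : ℕ :=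
  G.edgeSet.ncard + Nat.card G.ConnectedComponent - Fintype.card V

/-- Deleting a set of vertices from a graph: the induced subgraph on the complement. -/
def vdel {V : Type*} (G : SimpleGraph V) (S : Set V) : SimpleGraph ↥(Sᶜ) :=
  G.induce Sᶜ

/-- Restriction of a sign function to a set of vertices. -/
def σres {V : Type*} (σ : Sym2 V → ℝ) (s : Set V) : Sym2 s → ℝ :=
  fun e => σ (e.map Subtype.val)

/-- A signed graph is lower-optimal if `r + 2α = 2n - 2c`. -/
def lowerOptimal {V : Type*} [Fintype V] (G : SimpleGraph V) (σ : Sym2 V → ℝ) : Prop :=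
  srank G σ + 2 * _root_.indepNum G + 2 * cyclomatic G = 2 * Fintype.card V


open scoped Matrix

universe u

section Aux


def subProdEquiv {M N : Type*} [AddCommGroup M] [AddCommGroup N] [Module ℝ M] [Module ℝ N]
    (p : Submodule ℝ M) (q : Submodule ℝ N) : ↥(p.prod q) ≃ₗ[ℝ] ↥p × ↥q where
  toFun x := (⟨x.1.1, x.2.1⟩, ⟨x.1.2, x.2.2⟩)
  invFun x := ⟨(x.1.1, x.2.1), ⟨x.1.2, x.2.2⟩⟩
  map_add' x y := rfl
  map_smul' c x := rfl
  left_inv x := rfl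
  right_inv x := rfl

theorem myrange_prodMap {M N M' N' : Type*} [AddCommGroup M] [AddCommGroup N] [AddCommGroup M']
    [AddCommGroup N'] [Module ℝ M] [Module ℝ N] [Module ℝ M'] [Module ℝ N']
    (f : M →ₗ[ℝ] M') (g : N →ₗ[ℝ] N') :
    LinearMap.range (f.prodMap g) = (LinearMap.range f).prod (LinearMap.range g) := by
  ext ⟨a, b⟩
  constructor
  · rintro ⟨⟨x, y⟩, h⟩
    exact ⟨⟨x, congrArg Prod.fst h⟩, ⟨y, congrArg Prod.snd h⟩⟩
  · rintro ⟨⟨x, hx⟩, ⟨y, hy⟩⟩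
    exact ⟨(x, y), Prod.ext hx hy⟩

theorem myrank_fromBlocks {m n : Type*} [Fintype m] [Fintype n] [DecidableEq m] [DecidableEq n]
    (A : Matrix m m ℝ) (D : Matrix n n ℝ) :
    (Matrix.fromBlocks A 0 0 D).rank = A.rank + D.rank := by
  classical
  have h : (Matrix.fromBlocks A 0 0 D).mulVecLin =
      ((LinearEquiv.sumArrowLequivProdArrow m n ℝ ℝ).symm.toLinearMap.comp
        ((A.mulVecLin.prodMap D.mulVecLin).comp
          (LinearEquiv.sumArrowLequivProdArrow m n ℝ ℝ).toLinearMap)) := by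
    refine LinearMap.ext fun x => ?_
    simp only [Matrix.mulVecLin_apply, LinearMap.comp_apply, LinearEquiv.coe_toLinearMap,
      LinearMap.prodMap_apply, LinearEquiv.sumArrowLequivProdArrow, Equiv.sumArrowEquivProdArrow,
      Matrix.fromBlocks_mulVec, Matrix.zero_mulVec, add_zero, zero_add]
    rfl
  rw [Matrix.rank, h, LinearMap.range_comp, LinearMap.range_comp, LinearEquiv.range,
    Submodule.map_top]
  have e1 := (Submodule.equivMapOfInjective
    (LinearEquiv.sumArrowLequivProdArrow m n ℝ ℝ).symm.toLinearMap
    (LinearEquiv.sumArrowLequivProdArrow m n ℝ ℝ).symm.injective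
    (LinearMap.range (A.mulVecLin.prodMap D.mulVecLin))).symm
  rw [LinearEquiv.finrank_eq e1, myrange_prodMap,
    LinearEquiv.finrank_eq (subProdEquiv _ _), Module.finrank_prod, Matrix.rank, Matrix.rank]

variable {V : Type*} [Fintype V]

theorem sAdj_symm (T : SimpleGraph V) (σ : Sym2 V → ℝ) (i j : V) :
    sAdj T σ i j = sAdj T σ j i := by
  unfold sAdj
  by_cases h : T.Adj i j
  · rw [if_pos h, if_pos h.symm, Sym2.eq_swap]
  · rw [if_neg h, if_neg (fun h' => h h'.symm)]

def pcEquiv {V : Type*} (u v : V) (hne : u ≠ v) :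
    (Fin 2 ⊕ ↥(({u,v} : Set V)ᶜ)) ≃ V where
  toFun := Sum.elim ![u, v] Subtype.val
  invFun x := if hx : x = u then Sum.inl 0 else if hx' : x = v then Sum.inl 1
      else Sum.inr ⟨x, by simp [hx, hx']⟩
  left_inv := by
    rintro (i | ⟨x, hx⟩)
    · fin_cases i
      · simp
      · simp [hne.symm]
    · have h1 : x ≠ u := by intro h; apply hx; simp [h]
      have h2 : x ≠ v := by intro h; apply hx; simp [h]
      simp [h1, h2]
  right_inv := by
    intro x
    by_cases h1 : x = u
    · simp [h1]
    · by_cases h2 : x = v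
      · simp [h1, h2, hne.symm]
      · simp [h1, h2]

theorem rank_step (T : SimpleGraph V) (σ : Sym2 V → ℝ)
    (u v : V) (huv : T.Adj u v) (hleaf : ∀ w, T.Adj u w → w = v)
    (hs : σ s(u,v) ≠ 0) :
    (sAdj T σ).rank =
      2 + (sAdj (T.induce ({u,v}ᶜ : Set V)) (σres σ ({u,v}ᶜ : Set V))).rank := by
  classical
  set A := sAdj T σ with hA
  set s : ℝ := σ s(u,v) with hsdef
  have huvne : u ≠ v := huv.ne
  have hAuv : A u v = s := if_pos huv
  have hAu : ∀ w, w ≠ v → A u w = 0 := by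
    intro w hw
    show (if T.Adj u w then σ s(u,w) else 0) = 0
    rw [if_neg (fun h => hw (hleaf w h))]
  have hAu' : ∀ w, w ≠ v → A w u = 0 := fun w hw => (sAdj_symm T σ w u).trans (hAu w hw)
  -- the elimination matrix
  set N : Matrix V V ℝ := fun i j => if i = u ∧ j ≠ u ∧ j ≠ v then -(A v j) / s else 0 with hN
  have hNuv : N u v = 0 := by simp [hN]
  have hNuu : N u u = 0 := by simp [hN]
  have hNrow : ∀ i j, i ≠ u → N i j = 0 := by
    intro i j hi; simp [hN, hi]
  have hN2 : N * N = 0 := by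
    ext i j
    rw [Matrix.mul_apply]
    refine Finset.sum_eq_zero fun k _ => ?_
    by_cases hk : k = u
    · by_cases hi : i = u
      · rw [hk, hi, hNuu, zero_mul]
      · rw [hNrow i k hi, zero_mul]
    · rw [hNrow k j hk, mul_zero]
  set P : Matrix V V ℝ := 1 + N with hP
  have hPunit : IsUnit P := by
    have h1 : P * (1 - N) = 1 := by
      rw [hP, mul_sub, mul_one, add_mul, one_mul, hN2, add_zero, add_sub_cancel_right]
    have h2 : (1 - N) * P = 1 := by
      rw [hP, sub_mul, one_mul, mul_add, mul_one, hN2, add_zero, add_sub_cancel_right]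
    exact ⟨⟨P, 1 - N, h1, h2⟩, rfl⟩
  have hPdet : IsUnit P.det := (Matrix.isUnit_iff_isUnit_det P).mp hPunit
  have hPtdet : IsUnit Pᵀ.det := by rwa [Matrix.det_transpose]
  set B : Matrix V V ℝ := Pᵀ * A * P with hB
  have hrankB : B.rank = A.rank := by
    rw [hB, Matrix.rank_mul_eq_left_of_isUnit_det P (Pᵀ * A) hPdet,
      Matrix.rank_mul_eq_right_of_isUnit_det Pᵀ A hPtdet]
  -- entries of B
  have hBentry : ∀ i j, B i j = A i j + A i u * N u j + N u i * A u j := by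
    have hAN : A * N = Matrix.of (fun i j => A i u * N u j) := by
      ext i j
      rw [Matrix.mul_apply]
      rw [Finset.sum_eq_single u (fun k _ hk => by rw [hNrow k j hk, mul_zero])
        (fun h => absurd (Finset.mem_univ u) h)]
      rfl
    have hNA : Nᵀ * A = Matrix.of (fun i j => N u i * A u j) := by
      ext i j
      rw [Matrix.mul_apply]
      rw [Finset.sum_eq_single u (fun k _ hk => by
        rw [Matrix.transpose_apply, hNrow k i hk, zero_mul])
        (fun h => absurd (Finset.mem_univ u) h)]
      rfl
    have hNAN : Nᵀ * A * N = 0 := by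
      rw [hNA]
      ext i j
      rw [Matrix.mul_apply]
      refine Finset.sum_eq_zero fun k _ => ?_
      by_cases hk : k = u
      · rw [hk]
        have h0 : A u u = 0 := hAu u huvne
        simp [h0]
      · rw [hNrow k j hk, mul_zero]
    intro i j
    have hBd : B = A + Nᵀ * A + (A * N + Nᵀ * A * N) := by
      rw [hB, hP, Matrix.transpose_add, Matrix.transpose_one]
      simp only [add_mul, mul_add, one_mul, mul_one]
    rw [hBd, hNAN, add_zero]
    simp [hAN, hNA]
    ring
  -- entry facts
  have hdiag : ∀ i, A i i = 0 := fun i => by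
    show (if T.Adj i i then σ s(i,i) else 0) = 0
    rw [if_neg (T.irrefl)]
  have hAvu : A v u = s := (sAdj_symm T σ v u).trans hAuv
  have hBrowu : ∀ j, B u j = A u j := fun j => by
    rw [hBentry, hdiag, hNuu]; ring
  have hBcolu : ∀ i, B i u = A i u := fun i => by
    rw [hBentry, hNuu, hdiag]; ring
  have hNuw : ∀ w, w ≠ u → w ≠ v → N u w = -(A v w) / s := fun w h1 h2 => by
    simp [hN, h1, h2]
  have hBvw : ∀ w, w ≠ u → w ≠ v → B v w = 0 := fun w h1 h2 => by
    rw [hBentry, hAvu, hNuv, hNuw w h1 h2]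
    field_simp
    ring
  have hBwv : ∀ w, w ≠ u → w ≠ v → B w v = 0 := fun w h1 h2 => by
    have hsymm : A w v = A v w := sAdj_symm T σ w v
    rw [hBentry, hNuv, hNuw w h1 h2, hAuv, hsymm]
    field_simp
    ring
  have hBww : ∀ w w', w ≠ v → w' ≠ v → B w w' = A w w' := fun w w' h1 h2 => by
    rw [hBentry, hAu w' h2, hAu' w h1]; ring
  -- reindexing
  set W : Set V := ({u,v} : Set V)ᶜ with hW
  have hmemW : ∀ x : V, x ∈ W ↔ x ≠ u ∧ x ≠ v := by
    intro x; simp [hW]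
  set e : (Fin 2 ⊕ ↥W) ≃ V := pcEquiv u v huvne with he
  set X : Matrix (Fin 2) (Fin 2) ℝ := !![0, s; s, 0] with hX
  set Y : Matrix ↥W ↥W ℝ := sAdj (T.induce W) (σres σ W) with hY
  have hsub : B.submatrix e e = Matrix.fromBlocks X 0 0 Y := by
    ext i j
    rcases i with i | w <;> rcases j with j | w'
    · fin_cases i <;> fin_cases j
      · exact (hBrowu u).trans (hdiag u)
      · exact (hBrowu v).trans hAuv
      · exact (hBcolu v).trans hAvu
      · show B v v = (0 : ℝ)
        rw [hBentry, hNuv, hdiag]; ring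
    · have hw1 : (w' : V) ≠ u := ((hmemW w').mp w'.2).1
      have hw2 : (w' : V) ≠ v := ((hmemW w').mp w'.2).2
      fin_cases i
      · exact (hBrowu _).trans (hAu _ hw2)
      · exact hBvw _ hw1 hw2
    · have hw1 : (w : V) ≠ u := ((hmemW w).mp w.2).1
      have hw2 : (w : V) ≠ v := ((hmemW w).mp w.2).2
      fin_cases j
      · exact (hBcolu _).trans (hAu' _ hw2)
      · exact hBwv _ hw1 hw2
    · have hw2 : (w : V) ≠ v := ((hmemW w).mp w.2).2
      have hw2' : (w' : V) ≠ v := ((hmemW w').mp w'.2).2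
      show B (w : V) (w' : V) = Y w w'
      rw [hBww _ _ hw2 hw2']
      show (if T.Adj (w : V) (w' : V) then σ s((w : V), (w' : V)) else 0) =
        (if (T.induce W).Adj w w' then σres σ W s(w, w') else 0)
      by_cases had : T.Adj (w : V) (w' : V)
      · rw [if_pos had, if_pos (show (T.induce W).Adj w w' from had)]
        rfl
      · rw [if_neg had, if_neg (show ¬ (T.induce W).Adj w w' from had)]
  have hXrank : X.rank = 2 := by
    have hdet : X.det = -(s * s) := by
      rw [hX, Matrix.det_fin_two_of]
      ring
    have : IsUnit X.det := by
      rw [hdet]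
      exact isUnit_iff_ne_zero.mpr (by simpa using mul_ne_zero hs hs)
    rw [Matrix.rank_of_isUnit X ((Matrix.isUnit_iff_isUnit_det X).mpr this)]
    simp
  calc A.rank = B.rank := hrankB.symm
    _ = (B.submatrix e e).rank := (Matrix.rank_submatrix B e e).symm
    _ = (Matrix.fromBlocks X 0 0 Y).rank := by rw [hsub]
    _ = X.rank + Y.rank := myrank_fromBlocks X Y
    _ = 2 + Y.rank := by rw [hXrank]

lemma first_edge_eq {V : Type*} {G : SimpleGraph V} {a b c x : V}
    (h : G.Adj a c) (q : G.Walk c b) (hp : (Walk.cons h q).IsPath)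
    (hx : s(a, x) ∈ (Walk.cons h q).edges) : x = c := by
  rw [Walk.edges_cons, List.mem_cons] at hx
  rcases hx with hx | hx
  · exact Sym2.congr_right.mp hx
  · exfalso
    have ha : a ∈ q.support := Walk.fst_mem_support_of_mem_edges q hx
    rw [Walk.cons_isPath_iff] at hp
    exact hp.2 ha

lemma exists_leaf {V : Type*} [Fintype V] {T : SimpleGraph V} (hT : T.IsAcyclic)
    {a b : V} (hab : T.Adj a b) :
    ∃ u v, T.Adj u v ∧ ∀ w, T.Adj u w → w = v := by
  classical
  set S : Set ℕ := {n | ∃ (x y : V) (p : T.Walk x y), p.IsPath ∧ p.length = n} with hS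
  have h0 : 1 ∈ S := by
    refine ⟨a, b, Walk.cons hab Walk.nil, ?_, rfl⟩
    rw [Walk.cons_isPath_iff]
    exact ⟨Walk.IsPath.nil, by simp [hab.ne]⟩
  have hbdd : BddAbove S := by
    refine ⟨Fintype.card V, fun n hn => ?_⟩
    obtain ⟨x, y, p, hp, rfl⟩ := hn
    exact le_of_lt hp.length_lt
  have hn : sSup S ∈ S := Nat.sSup_mem ⟨1, h0⟩ hbdd
  obtain ⟨x, y, p, hp, hl⟩ := hn
  have h1 : 1 ≤ sSup S := le_csSup hbdd h0
  cases p with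
  | nil => simp at hl; omega
  | @cons _ c _ h q =>
    refine ⟨x, c, h, fun w hw => ?_⟩
    by_cases hwc : w = c
    · exact hwc
    by_cases hmem : w ∈ (Walk.cons h q).support
    · exfalso
      set q' := (Walk.cons h q).takeUntil w hmem with hq'
      have hq'path : q'.IsPath := hp.takeUntil hmem
      have hcyc : (Walk.cons hw.symm q').IsCycle := by
        rw [Walk.cons_isCycle_iff]
        refine ⟨hq'path, fun hedge => ?_⟩
        have hsub : s(w, x) ∈ (Walk.cons h q).edges :=
          Walk.edges_takeUntil_subset _ hmem hedge
        rw [Sym2.eq_swap] at hsub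
        exact hwc (first_edge_eq h q hp hsub)
      exact hT _ hcyc
    · have hpath : (Walk.cons hw.symm (Walk.cons h q)).IsPath := by
        rw [Walk.cons_isPath_iff]
        exact ⟨hp, hmem⟩
      have : (sSup S) + 1 ∈ S := ⟨w, y, _, hpath, by simp [hl]⟩
      have := le_csSup hbdd this
      omega


lemma bot_isMatching (G : SimpleGraph V) : (⊥ : G.Subgraph).IsMatching := by
  intro v hv
  rw [Subgraph.verts_bot] at hv
  exact absurd hv (Set.notMem_empty v)

lemma matchNum_bddAbove (G : SimpleGraph V) :
    BddAbove {n | ∃ M : G.Subgraph, M.IsMatching ∧ M.edgeSet.ncard = n} := by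
  refine ⟨Nat.card (Sym2 V), fun n hn => ?_⟩
  obtain ⟨M, _, rfl⟩ := hn
  have := Set.ncard_le_ncard (Set.subset_univ M.edgeSet) (Set.finite_univ)
  simpa [Set.ncard_univ] using this

lemma le_matchNum {G : SimpleGraph V} {M : G.Subgraph} (hM : M.IsMatching) :
    M.edgeSet.ncard ≤ matchNum G :=
  le_csSup (matchNum_bddAbove G) ⟨M, hM, rfl⟩

lemma matchNum_exists (G : SimpleGraph V) :
    ∃ M : G.Subgraph, M.IsMatching ∧ M.edgeSet.ncard = matchNum G := by
  have h0 : 0 ∈ {n | ∃ M : G.Subgraph, M.IsMatching ∧ M.edgeSet.ncard = n} :=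
    ⟨⊥, bot_isMatching G, by simp [Subgraph.edgeSet_bot]⟩
  exact Nat.sSup_mem ⟨0, h0⟩ (matchNum_bddAbove G)

lemma edgeSet_map_eq {W : Type*} {G : SimpleGraph V} {G' : SimpleGraph W} (f : G →g G')
    (M : G.Subgraph) : (M.map f).edgeSet = Sym2.map f '' M.edgeSet := by
  ext e
  induction e with
  | _ a b =>
    simp only [Subgraph.mem_edgeSet, Subgraph.map_adj, Relation.Map]
    constructor
    · rintro ⟨a', b', h, rfl, rfl⟩
      exact ⟨s(a', b'), Subgraph.mem_edgeSet.mpr h, Sym2.map_pair_eq f a' b'⟩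
    · rintro ⟨e', he', heq⟩
      induction e' with
      | _ a' b' =>
        rw [Sym2.map_pair_eq] at heq
        rw [Sym2.eq_iff] at heq
        rcases heq with ⟨rfl, rfl⟩ | ⟨rfl, rfl⟩
        · exact ⟨a', b', Subgraph.mem_edgeSet.mp he', rfl, rfl⟩
        · exact ⟨b', a', (Subgraph.mem_edgeSet.mp he').symm, rfl, rfl⟩

lemma edgeSet_map_ncard {W : Type*} {G : SimpleGraph V} {G' : SimpleGraph W} (f : G →g G')
    (hf : Function.Injective f) (M : G.Subgraph) :
    (M.map f).edgeSet.ncard = M.edgeSet.ncard := by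
  rw [edgeSet_map_eq, Set.ncard_image_of_injective _ (Sym2.map.injective hf)]

lemma matchNum_step_ge (T : SimpleGraph V) {u v : V} (huv : T.Adj u v) :
    matchNum (T.induce (({u,v} : Set V)ᶜ)) + 1 ≤ matchNum T := by
  classical
  set W : Set V := ({u,v} : Set V)ᶜ with hW
  obtain ⟨M', hM', hcard⟩ := matchNum_exists (T.induce W)
  set f : T.induce W ↪g T := SimpleGraph.Embedding.induce W with hf
  set M : T.Subgraph := (M'.map f.toHom) ⊔ T.subgraphOfAdj huv with hM
  have hMverts : (M'.map f.toHom).verts ⊆ W := by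
    rintro x ⟨a, ha, rfl⟩
    exact a.2
  have hmatch : M.IsMatching := by
    refine (hM'.map f.toHom f.injective).sup (Subgraph.IsMatching.subgraphOfAdj huv) ?_
    refine Set.disjoint_left.mpr fun x hx hx' => ?_
    have hxW : x ∈ W := hMverts (Subgraph.support_subset_verts _ hx)
    have hx2 : x ∈ ({u, v} : Set V) := by
      have := Subgraph.support_subset_verts _ hx'
      simpa using this
    exact hxW hx2
  have hedges : M.edgeSet.ncard = matchNum (T.induce W) + 1 := by
    rw [hM, Subgraph.edgeSet_sup, T.edgeSet_subgraphOfAdj huv]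
    rw [Set.ncard_union_eq ?disj (Set.toFinite _) (Set.toFinite _)]
    · rw [edgeSet_map_ncard f.toHom f.injective, hcard, Set.ncard_singleton]
    case disj =>
      refine Set.disjoint_left.mpr fun e he he' => ?_
      rw [Set.mem_singleton_iff] at he'
      subst he'
      have : (M'.map f.toHom).Adj u v := Subgraph.mem_edgeSet.mp he
      obtain ⟨a, b, _, ha, _⟩ := this
      have h2 : u ∈ W := by rw [← ha]; exact a.2
      simp [hW] at h2
  calc matchNum (T.induce W) + 1 = M.edgeSet.ncard := hedges.symm
    _ ≤ matchNum T := le_matchNum hmatch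

lemma edge_eq_of_mem {T : SimpleGraph V} {M : T.Subgraph} {a y : V} (hay : M.Adj a y)
    (hauniq : ∀ w, M.Adj a w → w = y) {e : Sym2 V} (he : e ∈ M.edgeSet) (hae : a ∈ e) :
    e = s(a, y) := by
  induction e with
  | _ b c =>
    have hbc : M.Adj b c := Subgraph.mem_edgeSet.mp he
    rcases Sym2.mem_iff.mp hae with rfl | rfl
    · rw [hauniq c hbc]
    · rw [hauniq b hbc.symm, Sym2.eq_swap]

lemma not_mem_edge {T : SimpleGraph V} {M : T.Subgraph} {a : V} (ha : a ∉ M.verts)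
    {e : Sym2 V} (he : e ∈ M.edgeSet) : a ∉ e := by
  induction e with
  | _ b c =>
    intro hae
    have hbc : M.Adj b c := Subgraph.mem_edgeSet.mp he
    rcases Sym2.mem_iff.mp hae with rfl | rfl
    · exact ha (M.edge_vert hbc)
    · exact ha (M.edge_vert hbc.symm)

lemma delete_matching (T : SimpleGraph V) (u v : V) (M : T.Subgraph) (hM : M.IsMatching)
    (D : Set V) (hu : u ∈ D) (hv : v ∈ D)
    (hcl : ∀ a b, M.Adj a b → a ∉ D → b ∉ D) :
    ∃ M'' : (T.induce (({u,v} : Set V)ᶜ)).Subgraph, M''.IsMatching ∧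
      M''.edgeSet.ncard = {e ∈ M.edgeSet | ∀ x ∈ e, x ∉ D}.ncard := by
  classical
  set W : Set V := ({u,v} : Set V)ᶜ with hW
  have hWD : ∀ {x : V}, x ∉ D → x ∈ W := by
    intro x hx
    simp only [hW, Set.mem_compl_iff, Set.mem_insert_iff, Set.mem_singleton_iff]
    rintro (rfl | rfl) <;> [exact hx hu; exact hx hv]
  set f : T.induce W ↪g T := SimpleGraph.Embedding.induce W with hf
  set M'' : (T.induce W).Subgraph := Subgraph.comap f.toHom (M.deleteVerts D) with hM''
  refine ⟨M'', ?_, ?_⟩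
  · rintro ⟨a, haW⟩ ha
    have haM : a ∈ M.verts ∧ a ∉ D := by
      have := ha
      rw [hM'', Subgraph.comap_verts, Set.mem_preimage, Subgraph.deleteVerts_verts] at this
      exact this
    obtain ⟨y, hy, hyu⟩ := hM haM.1
    have hyD : y ∉ D := hcl a y hy haM.2
    refine ⟨⟨y, hWD hyD⟩, ⟨M.adj_sub hy, ?_⟩, ?_⟩
    · rw [Subgraph.deleteVerts_adj]
      exact ⟨haM.1, haM.2, M.edge_vert hy.symm, hyD, hy⟩
    · rintro ⟨y', hy'W⟩ hadj
      rw [hM'', Subgraph.comap_adj, Subgraph.deleteVerts_adj] at hadj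
      exact Subtype.ext (hyu y' hadj.2.2.2.2.2)
  · have himg : Sym2.map (Subtype.val : ↥W → V) '' M''.edgeSet
        = {e ∈ M.edgeSet | ∀ x ∈ e, x ∉ D} := by
      ext e
      constructor
      · rintro ⟨e', he', rfl⟩
        induction e' with
        | _ a b =>
          have hadj := Subgraph.mem_edgeSet.mp he'
          rw [hM'', Subgraph.comap_adj, Subgraph.deleteVerts_adj] at hadj
          obtain ⟨-, hav, haD, hbv, hbD, hab⟩ := hadj
          refine ⟨Subgraph.mem_edgeSet.mpr hab, ?_⟩
          intro x hx
          rw [Sym2.map_pair_eq, Sym2.mem_iff] at hx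
          rcases hx with rfl | rfl <;> assumption
      · rintro ⟨he, hand⟩
        induction e with
        | _ a b =>
          have hab : M.Adj a b := Subgraph.mem_edgeSet.mp he
          have haD : a ∉ D := hand a (Sym2.mem_mk_left a b)
          have hbD : b ∉ D := hand b (Sym2.mem_mk_right a b)
          refine ⟨s(⟨a, hWD haD⟩, ⟨b, hWD hbD⟩), ?_, ?_⟩
          · refine Subgraph.mem_edgeSet.mpr ?_
            rw [hM'', Subgraph.comap_adj, Subgraph.deleteVerts_adj]
            exact ⟨M.adj_sub hab, M.edge_vert hab, haD, M.edge_vert hab.symm, hbD, hab⟩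
          · rw [Sym2.map_pair_eq]
    rw [← himg, Set.ncard_image_of_injective _ (Sym2.map.injective Subtype.val_injective)]

lemma matchNum_step_le (T : SimpleGraph V) {u v : V} (huv : T.Adj u v)
    (hleaf : ∀ w, T.Adj u w → w = v) :
    matchNum T ≤ matchNum (T.induce (({u,v} : Set V)ᶜ)) + 1 := by
  classical
  obtain ⟨M, hM, hcard⟩ := matchNum_exists T
  rw [← hcard]
  by_cases hu : u ∈ M.verts
  · obtain ⟨y, hy, hyu⟩ := hM hu
    have hyv : y = v := hleaf y (M.adj_sub hy)
    rw [hyv] at hy hyu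
    have hvv : v ∈ M.verts := M.edge_vert hy.symm
    obtain ⟨z, hz, hzu⟩ := hM hvv
    have hzu' : z = u := (hzu u hy.symm).symm
    rw [hzu'] at hz hzu
    have hcl : ∀ a b, M.Adj a b → a ∉ ({u,v} : Set V) → b ∉ ({u,v} : Set V) := by
      intro a b hab haD hbD
      rcases hbD with rfl | rfl
      · exact haD (by simp [hyu a hab.symm])
      · exact haD (by simp [hzu a hab.symm])
    obtain ⟨M'', hM''m, hM''c⟩ := delete_matching T u v M hM {u,v} (by simp) (by simp) hcl
    have hF : {e ∈ M.edgeSet | ∀ x ∈ e, x ∉ ({u,v} : Set V)} = M.edgeSet \ {s(u,v)} := by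
      ext e
      simp only [Set.mem_setOf_eq, Set.mem_diff, Set.mem_singleton_iff]
      constructor
      · rintro ⟨he, hP⟩
        refine ⟨he, fun heq => hP u (by rw [heq]; exact Sym2.mem_mk_left u v) (by simp)⟩
      · rintro ⟨he, hne⟩
        refine ⟨he, fun x hx hxD => hne ?_⟩
        rcases hxD with rfl | rfl
        · exact edge_eq_of_mem hy hyu he hx
        · rw [edge_eq_of_mem hz hzu he hx, Sym2.eq_swap]
    have huve : s(u,v) ∈ M.edgeSet := Subgraph.mem_edgeSet.mpr hy
    have := Set.ncard_diff_singleton_add_one huve (Set.toFinite _)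
    rw [hF] at hM''c
    have hle := le_matchNum hM''m
    omega
  · by_cases hv : v ∈ M.verts
    · obtain ⟨x, hx, hxu⟩ := hM hv
      have hxverts : x ∈ M.verts := M.edge_vert hx.symm
      obtain ⟨z, hz, hzu⟩ := hM hxverts
      have hzv : z = v := (hzu v hx.symm).symm
      rw [hzv] at hz hzu
      have hcl : ∀ a b, M.Adj a b → a ∉ ({u,v,x} : Set V) → b ∉ ({u,v,x} : Set V) := by
        intro a b hab haD hbD
        rcases hbD with rfl | rfl | rfl
        · exact hu (M.edge_vert hab.symm)
        · exact haD (by simp [hxu a hab.symm])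
        · exact haD (by simp [hzu a hab.symm])
      obtain ⟨M'', hM''m, hM''c⟩ := delete_matching T u v M hM {u,v,x} (by simp) (by simp) hcl
      have hF : {e ∈ M.edgeSet | ∀ y ∈ e, y ∉ ({u,v,x} : Set V)} = M.edgeSet \ {s(v,x)} := by
        ext e
        simp only [Set.mem_setOf_eq, Set.mem_diff, Set.mem_singleton_iff]
        constructor
        · rintro ⟨he, hP⟩
          refine ⟨he, fun heq => hP v (by rw [heq]; exact Sym2.mem_mk_left v x) (by simp)⟩
        · rintro ⟨he, hne⟩
          refine ⟨he, fun y hy hyD => ?_⟩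
          rcases hyD with rfl | rfl | rfl
          · exact not_mem_edge hu he hy
          · exact hne (edge_eq_of_mem hx hxu he hy)
          · exact hne (by rw [edge_eq_of_mem hz hzu he hy, Sym2.eq_swap])
      have hvxe : s(v,x) ∈ M.edgeSet := Subgraph.mem_edgeSet.mpr hx
      have := Set.ncard_diff_singleton_add_one hvxe (Set.toFinite _)
      rw [hF] at hM''c
      have hle := le_matchNum hM''m
      omega
    · have hcl : ∀ a b, M.Adj a b → a ∉ ({u,v} : Set V) → b ∉ ({u,v} : Set V) := by
        intro a b hab _ hbD
        rcases hbD with rfl | rfl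
        · exact hu (M.edge_vert hab.symm)
        · exact hv (M.edge_vert hab.symm)
      obtain ⟨M'', hM''m, hM''c⟩ := delete_matching T u v M hM {u,v} (by simp) (by simp) hcl
      have hF : {e ∈ M.edgeSet | ∀ y ∈ e, y ∉ ({u,v} : Set V)} = M.edgeSet := by
        ext e
        simp only [Set.mem_setOf_eq]
        constructor
        · rintro ⟨he, -⟩; exact he
        · intro he
          refine ⟨he, fun y hy hyD => ?_⟩
          rcases hyD with rfl | rfl
          · exact not_mem_edge hu he hy
          · exact not_mem_edge hv he hy
      rw [hF] at hM''c
      have hle := le_matchNum hM''m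
      omega

lemma matchNum_step (T : SimpleGraph V) {u v : V} (huv : T.Adj u v)
    (hleaf : ∀ w, T.Adj u w → w = v) :
    matchNum T = matchNum (T.induce (({u,v} : Set V)ᶜ)) + 1 :=
  le_antisymm (matchNum_step_le T huv hleaf) (matchNum_step_ge T huv)


lemma matchNum_eq_zero {V : Type*} [Fintype V] {T : SimpleGraph V}
    (h : ∀ a b, ¬ T.Adj a b) : matchNum T = 0 := by
  have h0 : 0 ∈ {n | ∃ M : T.Subgraph, M.IsMatching ∧ M.edgeSet.ncard = n} :=
    ⟨⊥, bot_isMatching T, by simp [Subgraph.edgeSet_bot]⟩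
  have hub : ∀ n ∈ {n | ∃ M : T.Subgraph, M.IsMatching ∧ M.edgeSet.ncard = n}, n ≤ 0 := by
    rintro n ⟨M, hM, rfl⟩
    have : M.edgeSet = ∅ := by
      ext e
      induction e with
      | _ a b =>
        simp only [Set.mem_empty_iff_false, iff_false, Subgraph.mem_edgeSet]
        exact fun hadj => h a b (M.adj_sub hadj)
    simp [this]
  exact Nat.le_zero.mp (csSup_le ⟨0, h0⟩ hub)

lemma rank_matchNum_of_no_edges {V : Type*} [Fintype V] {T : SimpleGraph V}
    (h : ∀ a b, ¬ T.Adj a b) (σ : Sym2 V → ℝ) : (sAdj T σ).rank = 2 * matchNum T := by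
  have hz : sAdj T σ = 0 := by
    ext i j
    show (if T.Adj i j then σ s(i,j) else 0) = 0
    rw [if_neg (h i j)]
  rw [hz, Matrix.rank_zero, matchNum_eq_zero h]

lemma isAcyclic_induce {V : Type*} {T : SimpleGraph V} (hT : T.IsAcyclic) (W : Set V) :
    (T.induce W).IsAcyclic := by
  intro a c hc
  exact hT _ ((Walk.map_isCycle_iff_of_injective
    (f := (SimpleGraph.Embedding.induce W (G := T)).toHom)
    (Subtype.val_injective)).mpr hc)

lemma key : ∀ (n : ℕ) {V : Type u} [Fintype V] (T : SimpleGraph V), Fintype.card V ≤ n →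
    T.IsAcyclic → ∀ (σ : Sym2 V → ℝ), (∀ e ∈ T.edgeSet, σ e = 1 ∨ σ e = -1) →
    (sAdj T σ).rank = 2 * matchNum T := by
  intro n
  induction n with
  | zero =>
    intro V _ T hcard hT σ hσ
    have hemp : IsEmpty V := Fintype.card_eq_zero_iff.mp (Nat.le_zero.mp hcard)
    exact rank_matchNum_of_no_edges (fun a b => (hemp.elim a)) σ
  | succ n ih =>
    intro V _ T hcard hT σ hσ
    by_cases hE : ∃ a b, T.Adj a b
    · obtain ⟨a, b, hab⟩ := hE
      obtain ⟨u, v, huv, hleaf⟩ := exists_leaf hT hab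
      set W : Set V := ({u,v} : Set V)ᶜ with hW
      have hcardW : Fintype.card ↥W ≤ n := by
        have hlt : Fintype.card ↥W < Fintype.card V := by
          refine Fintype.card_subtype_lt (x := u) ?_
          simp [hW]
        omega
      have hs : σ s(u,v) ≠ 0 := by
        rcases hσ s(u,v) (T.mem_edgeSet.mpr huv) with h | h <;> rw [h] <;> norm_num
      have hσ' : ∀ e ∈ (T.induce W).edgeSet, σres σ W e = 1 ∨ σres σ W e = -1 := by
        intro e he
        induction e with
        | _ x y =>
          have hadj : T.Adj (x : V) (y : V) := (T.induce W).mem_edgeSet.mp he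
          exact hσ s((x : V), (y : V)) (T.mem_edgeSet.mpr hadj)
      have hrank := rank_step T σ u v huv hleaf hs
      have hih := ih (T.induce W) hcardW (isAcyclic_induce hT W) (σres σ W) hσ'
      have hmn := matchNum_step T huv hleaf
      rw [hrank, hih, hmn]
      ring
    · push_neg at hE
      exact rank_matchNum_of_no_edges hE σ

end Aux

theorem srank_forest {V : Type*} [Fintype V] (T : SimpleGraph V) (hT : T.IsAcyclic)
    (σ : Sym2 V → ℝ) (hσ : ∀ e ∈ T.edgeSet, σ e = 1 ∨ σ e = -1) :
    srank T σ = srank T (fun _ => 1) ∧ srank T σ = 2 * matchNum T := by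
  have h1 : srank T σ = 2 * matchNum T := key (Fintype.card V) T le_rfl hT σ hσ
  have h2 : srank T (fun _ => 1) = 2 * matchNum T :=
    key (Fintype.card V) T le_rfl hT _ (fun e _ => Or.inl rfl)
  exact ⟨h1.trans h2.symm, h1⟩
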